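/- Let G be a finite 3-connected simple graph, let S = {x, y, z} be a 3-cut of G, and suppose G − S consists of exactly two components C₁ and C₂. For i = 1, 2, let F_i be a fan of minimum order among all c–S fans in G[V(C_i) ∪ S] and among all vertices c of C_i. If V(C₁) ∪ S ≠ V(F₁) and V(C₂) ∪ S ≠ V(F₂), then G has at least two contractible non-edges. -/

import Mathlib

open SimpleGraph

variable {V : Type*}

/-- A graph is `k`-connected: it has at least `k+1` vertices, and removing any set of
fewer than `k` vertices leaves a connected graph. -/
def KConnected (k : ℕ) (G : SimpleGraph V) : Prop :=
  k + 1 ≤ Nat.card V ∧ ∀ S : Set V, S.ncard < k → (G.induce Sᶜ).Connected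

/-- Contraction of the non-edge `{u, v}`: `u` and `v` are replaced by a single
vertex (represented here by `u`), adjacent to every vertex that was adjacent to
`u` or to `v`. -/
def contractNonEdge (G : SimpleGraph V) (u v : V) : SimpleGraph {w : V // w ≠ v} where
  Adj a b := a ≠ b ∧ (G.Adj a.1 b.1 ∨ (a.1 = u ∧ G.Adj v b.1) ∨ (b.1 = u ∧ G.Adj a.1 v))
  symm := by
    constructor
    rintro a b ⟨hab, h | ⟨h1, h2⟩ | ⟨h1, h2⟩⟩
    · exact ⟨hab.symm, Or.inl h.symm⟩
    · exact ⟨hab.symm, Or.inr (Or.inr ⟨h1, h2.symm⟩)⟩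
    · exact ⟨hab.symm, Or.inr (Or.inl ⟨h1, h2.symm⟩)⟩
  loopless := ⟨fun a h => h.1 rfl⟩

/-- `{u, v}` is a contractible non-edge of `G`: a non-edge whose contraction yields
a `3`-connected graph. -/
def IsContractibleNonEdge (G : SimpleGraph V) (u v : V) : Prop :=
  u ≠ v ∧ ¬ G.Adj u v ∧ KConnected 3 (contractNonEdge G u v)

/-- The set of contractible non-edges of `G`, as unordered pairs of vertices. -/
def contractibleNonEdges (G : SimpleGraph V) : Set (Sym2 V) :=
  {p | ∃ u v : V, p = s(u, v) ∧ IsContractibleNonEdge G u v}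

/-- `S` is a cut of `G`: deleting the vertices of `S` leaves a disconnected graph. -/
def IsCutSet (G : SimpleGraph V) (S : Set V) : Prop :=
  ¬ (G.induce Sᶜ).Preconnected

/-- `C` is the vertex set of a (connected) component of `G − S`. -/
def IsCompOf (G : SimpleGraph V) (S : Set V) (C : Set V) : Prop :=
  C.Nonempty ∧ C ⊆ Sᶜ ∧ (G.induce C).Connected ∧
    ∀ x ∈ C, ∀ y, y ∉ S → G.Adj x y → y ∈ C

/-- A `c`–`S` fan for a three-element set `S = {s1, s2, s3}` inside the induced
subgraph `G[A]`: three paths of `G` from `c ∉ S` to the three (distinct) vertices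
of `S`, pairwise sharing only the vertex `c`, each meeting `S` only in its final
endpoint, and with all their vertices inside `A`. -/
structure Fan3 (G : SimpleGraph V) (A : Set V) (c : V) (S : Set V) where
  s1 : V
  s2 : V
  s3 : V
  hS : S = {s1, s2, s3}
  h12 : s1 ≠ s2
  h13 : s1 ≠ s3
  h23 : s2 ≠ s3
  hc : c ∉ S
  p1 : G.Walk c s1
  p2 : G.Walk c s2
  p3 : G.Walk c s3
  hp1 : p1.IsPath
  hp2 : p2.IsPath
  hp3 : p3.IsPath
  hA1 : ∀ x ∈ p1.support, x ∈ A
  hA2 : ∀ x ∈ p2.support, x ∈ A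
  hA3 : ∀ x ∈ p3.support, x ∈ A
  hS1 : ∀ x ∈ p1.support, x ∈ S → x = s1
  hS2 : ∀ x ∈ p2.support, x ∈ S → x = s2
  hS3 : ∀ x ∈ p3.support, x ∈ S → x = s3
  hI12 : ∀ x ∈ p1.support, x ∈ p2.support → x = c
  hI13 : ∀ x ∈ p1.support, x ∈ p3.support → x = c
  hI23 : ∀ x ∈ p2.support, x ∈ p3.support → x = c

/-- The vertex set of a fan. -/
def Fan3.verts {G : SimpleGraph V} {A : Set V} {c : V} {S : Set V}
    (F : Fan3 G A c S) : Set V :=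
  {x | x ∈ F.p1.support ∨ x ∈ F.p2.support ∨ x ∈ F.p3.support}

/-- The order of a fan is its number of vertices. -/
noncomputable def Fan3.order {G : SimpleGraph V} {A : Set V} {c : V} {S : Set V}
    (F : Fan3 G A c S) : ℕ :=
  F.verts.ncard


section Helpers
variable {W : Type*} (G : SimpleGraph W)

/-- Reachability by a walk avoiding a vertex set `T`. -/
def ReachAvoid (T : Set W) (a b : W) : Prop :=
  ∃ w : G.Walk a b, ∀ x ∈ w.support, x ∉ T

variable {G}

lemma ReachAvoid.refl {T : Set W} {a : W} (ha : a ∉ T) : ReachAvoid G T a a :=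
  ⟨Walk.nil, by simp [ha]⟩

lemma ReachAvoid.symm {T : Set W} {a b : W} (h : ReachAvoid G T a b) : ReachAvoid G T b a := by
  obtain ⟨w, hw⟩ := h
  exact ⟨w.reverse, by simpa using hw⟩

lemma ReachAvoid.trans {T : Set W} {a b c : W} (h : ReachAvoid G T a b)
    (h' : ReachAvoid G T b c) : ReachAvoid G T a c := by
  obtain ⟨w, hw⟩ := h; obtain ⟨w', hw'⟩ := h'
  refine ⟨w.append w', ?_⟩
  intro x hx
  rw [Walk.support_append] at hx
  rcases List.mem_append.1 hx with h | h
  · exact hw x h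
  · exact hw' x (List.mem_of_mem_tail h)

lemma ReachAvoid.of_adj {T : Set W} {a b : W} (h : G.Adj a b) (ha : a ∉ T) (hb : b ∉ T) :
    ReachAvoid G T a b :=
  ⟨h.toWalk, by simp [Walk.support_cons, ha, hb]⟩

lemma ReachAvoid.mono {T T' : Set W} (hT : T' ⊆ T) {a b : W} (h : ReachAvoid G T a b) :
    ReachAvoid G T' a b := by
  obtain ⟨w, hw⟩ := h
  exact ⟨w, fun x hx hxT => hw x hx (hT hxT)⟩

/-- From a walk in an induced subgraph to an avoiding walk. -/
lemma reachAvoid_of_induce {T : Set W} {a b : (Tᶜ : Set W)}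
    (h : (G.induce (Tᶜ : Set W)).Reachable a b) : ReachAvoid G T a.1 b.1 := by
  obtain ⟨w⟩ := h
  refine ⟨w.map (SimpleGraph.Embedding.induce (Tᶜ : Set W)).toHom, ?_⟩
  intro x hx
  replace hx : x ∈ (w.map (SimpleGraph.Embedding.induce (Tᶜ : Set W)).toHom).support := hx
  rw [Walk.support_map] at hx
  obtain ⟨y, hy, rfl⟩ := List.mem_map.1 hx
  exact y.2

/-- From an avoiding walk to a walk in the induced subgraph. -/
lemma induce_reachable_of_reachAvoid {T : Set W} {a b : W}
    (h : ReachAvoid G T a b) (ha : a ∉ T) (hb : b ∉ T) :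
    (G.induce (Tᶜ : Set W)).Reachable ⟨a, ha⟩ ⟨b, hb⟩ := by
  obtain ⟨w, hw⟩ := h
  induction w with
  | nil => exact Reachable.refl _
  | @cons u v d hadj w ih =>
      have hv : v ∉ T := hw v (by simp)
      have : (G.induce (Tᶜ : Set W)).Adj ⟨u, ha⟩ ⟨v, hv⟩ := by
        simpa [SimpleGraph.comap] using hadj
      exact (this.reachable).trans (ih hv hb (fun x hx => hw x (List.mem_cons_of_mem _ hx)))

lemma kconn_reach (hG : KConnected 3 G) {T : Set W} (hT : T.ncard < 3) {a b : W}
    (ha : a ∉ T) (hb : b ∉ T) : ReachAvoid G T a b := by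
  have := (hG.2 T hT).preconnected ⟨a, ha⟩ ⟨b, hb⟩
  exact reachAvoid_of_induce this

end Helpers
section Helpers2
variable {W : Type*} {G : SimpleGraph W}

lemma connected_induce_of {T : Set W} (hne : ∃ b, b ∉ T)
    (h : ∀ a b, a ∉ T → b ∉ T → ReachAvoid G T a b) : (G.induce (Tᶜ : Set W)).Connected := by
  obtain ⟨b0, hb0⟩ := hne
  haveI : Nonempty (Tᶜ : Set W) := ⟨⟨b0, hb0⟩⟩
  refine ⟨fun a b => ?_⟩
  obtain ⟨a, ha⟩ := a
  obtain ⟨b, hb⟩ := b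
  exact induce_reachable_of_reachAvoid (h a b ha hb) ha hb

/-- Walk-exit lemma: a walk from inside `C` to outside `C` avoiding `D` must
exit `C` through `S \ D`. -/
lemma exit_walk {S C D : Set W}
    (hclose : ∀ p ∈ C, ∀ q, G.Adj p q → q ∈ C ∪ S) :
    ∀ {p c0 : W} (w : G.Walk p c0), (∀ x ∈ w.support, x ∉ D) → p ∈ C → c0 ∉ C →
    ∃ s0 k : W, s0 ∈ S ∧ s0 ∉ D ∧ k ∈ C ∧ G.Adj k s0 ∧
      ∃ w' : G.Walk p k, ∀ x ∈ w'.support, x ∈ C ∧ x ∉ D := by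
  intro p c0 w
  induction w with
  | nil => intro _ hp hc; exact absurd hp hc
  | @cons u v d hadj w ih =>
      intro hw hp hc0
      have hvD : v ∉ D := hw v (by simp)
      have huD : u ∉ D := hw u (by simp)
      rcases hclose u hp v hadj with hvC | hvS
      · obtain ⟨s0, k, hs0, hs0D, hk, hks, w', hw'⟩ :=
          ih (fun x hx => hw x (List.mem_cons_of_mem _ hx)) hvC hc0
        exact ⟨s0, k, hs0, hs0D, hk, hks, Walk.cons hadj w', by
          intro x hx
          rcases List.mem_cons.1 hx with rfl | hx
          · exact ⟨hp, huD⟩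
          · exact hw' x hx⟩
      · exact ⟨v, u, hvS, hvD, hp, hadj, Walk.nil, by
          intro x hx; rcases List.mem_cons.1 hx with rfl | hx
          · exact ⟨hp, huD⟩
          · simp at hx⟩

/-- Escape lemma: from any vertex of `C` avoiding a set `D` of at most 2 vertices,
one can reach `S \ D` staying inside `C`. -/
lemma escape (hG : KConnected 3 G) {S C : Set W}
    (hclose : ∀ p ∈ C, ∀ q, G.Adj p q → q ∈ C ∪ S)
    {D : Set W} (hD : D.ncard ≤ 2) (hDsub : D ⊆ C ∪ S)
    {c0 : W} (hc0C : c0 ∉ C) (hc0S : c0 ∉ S)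
    {p : W} (hp : p ∈ C) (hpD : p ∉ D) :
    ∃ s0 k : W, s0 ∈ S ∧ s0 ∉ D ∧ k ∈ C ∧ G.Adj k s0 ∧
      ∃ w : G.Walk p k, ∀ x ∈ w.support, x ∈ C ∧ x ∉ D := by
  have hc0D : c0 ∉ D := fun h => by rcases hDsub h with h | h <;> [exact hc0C h; exact hc0S h]
  obtain ⟨w, hw⟩ := kconn_reach hG (lt_of_le_of_lt hD (by norm_num)) hpD hc0D
  exact exit_walk hclose w hw hp hc0C

/-- A prefix of a path that ends at its unique `S`-vertex stays outside `S`. -/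
lemma path_prefix {S : Set W} {c s : W} {pw : G.Walk c s} (hpath : pw.IsPath)
    (hS : ∀ x ∈ pw.support, x ∈ S → x = s) {p : W} (hp : p ∈ pw.support) (hps : p ≠ s) :
    ∃ w : G.Walk c p, ∀ x ∈ w.support, x ∈ pw.support ∧ x ∉ S := by
  classical
  refine ⟨pw.takeUntil p hp, fun x hx => ?_⟩
  have hsub := Walk.support_takeUntil_subset pw hp
  refine ⟨hsub hx, fun hxS => ?_⟩
  have hxs : x = s := hS x (hsub hx) hxS
  subst hxs
  have hspec := pw.take_spec hp
  have hnodup : pw.support.Nodup := hpath.support_nodup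
  rw [← hspec, Walk.support_append] at hnodup
  have hdisj := (List.nodup_append.1 hnodup).2.2
  have hs_in_drop : x ∈ (pw.dropUntil p hp).support := Walk.end_mem_support _
  have : x ∈ (pw.dropUntil p hp).support.tail := by
    have hcons := (pw.dropUntil p hp).support_eq_cons
    rw [hcons] at hs_in_drop
    rcases List.mem_cons.1 hs_in_drop with h | h
    · exact absurd h (Ne.symm hps)
    · exact h
  exact hdisj x hx x this rfl

end Helpers2
section Helpers3
variable {W : Type*} {G : SimpleGraph W}

lemma lift_walk_avoid_v {u v : W} :
    ∀ {p q : W} (w : G.Walk p q) (hp : p ≠ v) (hq : q ≠ v), (∀ x ∈ w.support, x ≠ v) →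
    ∃ w' : (contractNonEdge G u v).Walk ⟨p, hp⟩ ⟨q, hq⟩, ∀ x ∈ w'.support, x.1 ∈ w.support := by
  intro p q w
  induction w with
  | nil => intro hp hq _; exact ⟨Walk.nil, by simp⟩
  | @cons a b c hadj w ih =>
      intro hp hq hw
      have hb : b ≠ v := hw b (by simp)
      have hedge : (contractNonEdge G u v).Adj ⟨a, hp⟩ ⟨b, hb⟩ :=
        And.intro (fun h => hadj.ne (congrArg Subtype.val h)) (Or.inl hadj)
      obtain ⟨w', hw'⟩ := ih hb hq (fun x hx => hw x (List.mem_cons_of_mem _ hx))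
      refine ⟨Walk.cons hedge w', fun x hx => ?_⟩
      rcases List.mem_cons.1 hx with rfl | hx
      · simp
      · exact List.mem_cons_of_mem _ (hw' x hx)

lemma lift_walk_replace {u v : W} (huv : ¬ G.Adj u v) (hne : u ≠ v) {D : Set W} (huD : u ∉ D) :
    ∀ (n : ℕ) {p q : W} (w : G.Walk p q), w.length ≤ n → ∀ (hp : p ≠ v) (hq : q ≠ v),
    (∀ x ∈ w.support, x ∉ D) →
    ∃ w' : (contractNonEdge G u v).Walk ⟨p, hp⟩ ⟨q, hq⟩, ∀ x ∈ w'.support, x.1 ∉ D := by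
  intro n
  induction n with
  | zero =>
      intro p q w hlen hp hq hw
      cases w with
      | nil => exact ⟨Walk.nil, by simpa using hw p (by simp)⟩
      | cons h w => simp [Walk.length_cons] at hlen
  | succ n ih =>
      intro p q w hlen hp hq hw
      cases w with
      | nil => exact ⟨Walk.nil, by simpa using hw p (by simp)⟩
      | @cons _ r _ hadj w' =>
          have hpD : p ∉ D := hw p (by simp)
          by_cases hr : r = v
          · cases w' with
            | nil => exact absurd hr hq
            | @cons _ r' _ hadj2 w'' =>
                have hadjpv : G.Adj p v := by rwa [hr] at hadj
                have hadj2v : G.Adj v r' := by rwa [hr] at hadj2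
                have hr' : r' ≠ v := hadj2v.ne'
                have hpu : p ≠ u := fun h => huv (h ▸ hadjpv)
                have hedge1 : (contractNonEdge G u v).Adj ⟨p, hp⟩ ⟨u, hne⟩ :=
                  And.intro (fun h => hpu (congrArg Subtype.val h)) (Or.inr (Or.inr ⟨rfl, hadjpv⟩))
                have hlen'' : w''.length ≤ n := by
                  simp only [Walk.length_cons] at hlen; omega
                obtain ⟨W2, hW2⟩ := ih w'' hlen'' hr' hq
                  (fun x hx => hw x (by
                    simp only [Walk.support_cons, List.mem_cons]
                    exact Or.inr (Or.inr hx)))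
                by_cases hur : u = r'
                · refine ⟨Walk.cons hedge1 (W2.copy (Subtype.ext hur.symm) rfl),
                    fun x hx => ?_⟩
                  rcases List.mem_cons.1 hx with rfl | hx
                  · exact hpD
                  · have : x ∈ W2.support := by simpa [Walk.support_copy] using hx
                    exact hW2 x this
                · have hedge2 : (contractNonEdge G u v).Adj ⟨u, hne⟩ ⟨r', hr'⟩ :=
                    And.intro (fun h => hur (congrArg Subtype.val h)) (Or.inr (Or.inl ⟨rfl, hadj2v⟩))
                  refine ⟨Walk.cons hedge1 (Walk.cons hedge2 W2), fun x hx => ?_⟩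
                  rcases List.mem_cons.1 hx with rfl | hx
                  · exact hpD
                  · rcases List.mem_cons.1 hx with rfl | hx
                    · exact huD
                    · exact hW2 x hx
          · have hedge : (contractNonEdge G u v).Adj ⟨p, hp⟩ ⟨r, hr⟩ :=
              And.intro (fun h => hadj.ne (congrArg Subtype.val h)) (Or.inl hadj)
            have hlen' : w'.length ≤ n := by simp only [Walk.length_cons] at hlen; omega
            obtain ⟨W2, hW2⟩ := ih w' hlen' hr hq
              (fun x hx => hw x (List.mem_cons_of_mem _ hx))
            refine ⟨Walk.cons hedge W2, fun x hx => ?_⟩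
            rcases List.mem_cons.1 hx with rfl | hx
            · exact hpD
            · exact hW2 x hx

lemma three_cover {T : Set W} (hfin : T.Finite) {u v : W} (hu : u ∈ T) (hv : v ∈ T)
    (huv : u ≠ v) (h3 : T.ncard ≤ 3) : ∃ t, t ∈ T ∧ T ⊆ {u, v, t} := by
  rcases (T \ {u, v}).eq_empty_or_nonempty with hemp | ⟨t, ht⟩
  · refine ⟨u, hu, fun w hw => ?_⟩
    have : w ∉ T \ {u, v} := by simp [hemp]
    simp only [Set.mem_diff, Set.mem_insert_iff, Set.mem_singleton_iff] at this ⊢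
    tauto
  · refine ⟨t, ht.1, fun w hw => ?_⟩
    by_contra hwm
    simp only [Set.mem_insert_iff, Set.mem_singleton_iff, not_or] at hwm
    obtain ⟨hwu, hwv, hwt⟩ := hwm
    have htuv := ht.2
    simp only [Set.mem_insert_iff, Set.mem_singleton_iff, not_or] at htuv
    have hsub : {u, v, t, w} ⊆ T := by
      intro a ha
      simp only [Set.mem_insert_iff, Set.mem_singleton_iff] at ha
      rcases ha with rfl | rfl | rfl | rfl
      exacts [hu, hv, ht.1, hw]
    have hcard : ({u, v, t, w} : Set W).ncard = 4 := by
      rw [Set.ncard_insert_of_notMem, Set.ncard_insert_of_notMem,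
        Set.ncard_insert_of_notMem, Set.ncard_singleton]
      · simp only [Set.mem_singleton_iff]; exact fun h => hwt h.symm
      · simp only [Set.mem_insert_iff, Set.mem_singleton_iff, not_or]
        exact ⟨fun h => htuv.2 h.symm, fun h => hwv h.symm⟩
      · simp only [Set.mem_insert_iff, Set.mem_singleton_iff, not_or]
        exact ⟨huv, fun h => htuv.1 h.symm, fun h => hwu h.symm⟩
    have := Set.ncard_le_ncard hsub hfin
    omega

lemma contractible_of_cuts (hG : KConnected 3 G) {u v : W} (hne : u ≠ v) (huv : ¬ G.Adj u v)
    (hcard : 5 ≤ Nat.card W)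
    (hcut : ∀ t, ∀ a b, a ∉ ({u, v, t} : Set W) → b ∉ ({u, v, t} : Set W) →
      ReachAvoid G {u, v, t} a b) :
    IsContractibleNonEdge G u v := by
  classical
  have hfinW : Finite W := Nat.finite_of_card_ne_zero (by omega)
  haveI := Fintype.ofFinite W
  have hcardV' : Nat.card {w : W // w ≠ v} = Nat.card W - 1 := by
    rw [Nat.card_eq_fintype_card, Nat.card_eq_fintype_card]
    have h1 : Fintype.card {w : W // w ≠ v} = Fintype.card W - Fintype.card {w : W // w = v} :=
      Fintype.card_subtype_compl _
    rw [h1, Fintype.card_subtype_eq]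
  refine ⟨hne, huv, ⟨by rw [hcardV']; omega, fun S' hS' => ?_⟩⟩
  set S'' : Set W := Subtype.val '' S' with hS''def
  have hS''card : S''.ncard = S'.ncard := Set.ncard_image_of_injective _ Subtype.val_injective
  have hS'lt : S'.ncard < 3 := hS'
  have hbex : ∃ b, b ∉ S' := by
    by_contra h
    push_neg at h
    have : S' = Set.univ := Set.eq_univ_of_forall h
    rw [this, Set.ncard_univ, hcardV'] at hS'lt
    omega
  refine connected_induce_of hbex ?_
  intro a b ha hb
  have haS'' : a.1 ∉ S'' := by
    rintro ⟨c, hc, hcc⟩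
    exact ha (by rwa [← Subtype.val_injective hcc])
  have hbS'' : b.1 ∉ S'' := by
    rintro ⟨c, hc, hcc⟩
    exact hb (by rwa [← Subtype.val_injective hcc])
  by_cases hu : u ∈ S''
  · set T : Set W := insert v S'' with hTdef
    have hTcard : T.ncard ≤ 3 := le_trans (Set.ncard_insert_le _ _) (by omega)
    obtain ⟨t, htT, hTsub⟩ := three_cover (Set.toFinite T) (Set.mem_insert_of_mem _ hu)
      (Set.mem_insert _ _) hne hTcard
    have haT : a.1 ∉ T := by
      rintro (h | h)
      · exact a.2 h
      · exact haS'' h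
    have hbT : b.1 ∉ T := by
      rintro (h | h)
      · exact b.2 h
      · exact hbS'' h
    have htuvT : ({u, v, t} : Set W) ⊆ T := by
      intro w hw
      rcases hw with rfl | rfl | rfl
      exacts [Set.mem_insert_of_mem _ hu, Set.mem_insert _ _, htT]
    obtain ⟨w, hw⟩ := hcut t a.1 b.1 (fun h => haT (htuvT h)) (fun h => hbT (htuvT h))
    have hwv : ∀ x ∈ w.support, x ≠ v := by
      intro x hx h
      exact hw x hx (by subst h; simp)
    obtain ⟨w', hw'⟩ := lift_walk_avoid_v (u := u) w a.2 b.2 hwv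
    exact ⟨w', fun x hx hxS' => hw x.1 (hw' x hx)
      (hTsub (Set.mem_insert_of_mem _ ⟨x, hxS', rfl⟩))⟩
  · obtain ⟨w, hw⟩ := kconn_reach hG (show S''.ncard < 3 by omega) haS'' hbS''
    obtain ⟨w', hw'⟩ := lift_walk_replace huv hne hu w.length w le_rfl a.2 b.2 hw
    exact ⟨w', fun x hx hxS' => hw' x hx ⟨x, hxS', rfl⟩⟩

end Helpers3
section Helpers4
variable {V : Type*} {G : SimpleGraph V} {S : Set V} {c : V}

lemma reach_in_comp {C : Set V} (hconn : (G.induce C).Connected) {a b : V}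
    (ha : a ∈ C) (hb : b ∈ C) :
    ∃ w : G.Walk a b, ∀ x ∈ w.support, x ∈ C := by
  obtain ⟨w⟩ := hconn.preconnected ⟨a, ha⟩ ⟨b, hb⟩
  refine ⟨w.map (SimpleGraph.Embedding.induce C).toHom, ?_⟩
  intro x hx
  replace hx : x ∈ (w.map (SimpleGraph.Embedding.induce C).toHom).support := hx
  rw [Walk.support_map] at hx
  obtain ⟨y, hy, rfl⟩ := List.mem_map.1 hx
  exact y.2

lemma fan_S_subset {A : Set V} (F : Fan3 G A c S) : S ⊆ F.verts := by
  intro s hs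
  rw [F.hS] at hs
  simp only [Set.mem_insert_iff, Set.mem_singleton_iff] at hs
  rcases hs with rfl | rfl | rfl
  · exact Or.inl (Walk.end_mem_support _)
  · exact Or.inr (Or.inl (Walk.end_mem_support _))
  · exact Or.inr (Or.inr (Walk.end_mem_support _))

lemma fan_c_mem {A : Set V} (F : Fan3 G A c S) : c ∈ F.verts :=
  Or.inl (Walk.start_mem_support _)

lemma fan_path {A : Set V} (F : Fan3 G A c S) {s : V} (hs : s ∈ S) :
    ∃ pw : G.Walk c s, pw.IsPath ∧ (∀ x ∈ pw.support, x ∈ F.verts) ∧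
      (∀ x ∈ pw.support, x ∈ A) ∧ (∀ x ∈ pw.support, x ∈ S → x = s) := by
  rw [F.hS] at hs
  simp only [Set.mem_insert_iff, Set.mem_singleton_iff] at hs
  rcases hs with rfl | rfl | rfl
  · exact ⟨F.p1, F.hp1, fun x hx => Or.inl hx, F.hA1, F.hS1⟩
  · exact ⟨F.p2, F.hp2, fun x hx => Or.inr (Or.inl hx), F.hA2, F.hS2⟩
  · exact ⟨F.p3, F.hp3, fun x hx => Or.inr (Or.inr hx), F.hA3, F.hS3⟩

lemma fan_mem_reach {C : Set V} (F : Fan3 G (C ∪ S) c S) (hCS : ∀ x ∈ C, x ∉ S)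
    {p : V} (hpv : p ∈ F.verts) (hpC : p ∈ C) :
    ∃ w : G.Walk p c, ∀ x ∈ w.support, x ∈ C ∧ x ∈ F.verts := by
  have hs1 : F.s1 ∈ S := by
    have h : F.s1 ∈ ({F.s1, F.s2, F.s3} : Set V) := by simp
    rwa [← F.hS] at h
  have hs2 : F.s2 ∈ S := by
    have h : F.s2 ∈ ({F.s1, F.s2, F.s3} : Set V) := by simp
    rwa [← F.hS] at h
  have hs3 : F.s3 ∈ S := by
    have h : F.s3 ∈ ({F.s1, F.s2, F.s3} : Set V) := by simp
    rwa [← F.hS] at h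
  have main : ∀ (s : V), s ∈ S → ∀ (pw : G.Walk c s), pw.IsPath →
      (∀ x ∈ pw.support, x ∈ C ∪ S) → (∀ x ∈ pw.support, x ∈ S → x = s) →
      (∀ x ∈ pw.support, x ∈ F.verts) → p ∈ pw.support →
      ∃ w : G.Walk p c, ∀ x ∈ w.support, x ∈ C ∧ x ∈ F.verts := by
    intro s hsS pw hpath hA hs hv hp
    have hps : p ≠ s := fun h => hCS p hpC (h ▸ hsS)
    obtain ⟨w, hw⟩ := path_prefix hpath hs hp hps
    refine ⟨w.reverse, fun x hx => ?_⟩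
    rw [Walk.support_reverse, List.mem_reverse] at hx
    obtain ⟨hx1, hx2⟩ := hw x hx
    rcases hA x hx1 with h | h
    · exact ⟨h, hv x hx1⟩
    · exact absurd h hx2
  rcases hpv with h | h | h
  · exact main F.s1 hs1 F.p1 F.hp1 F.hA1 F.hS1 (fun x hx => Or.inl hx) h
  · exact main F.s2 hs2 F.p2 F.hp2 F.hA2 F.hS2 (fun x hx => Or.inr (Or.inl hx)) h
  · exact main F.s3 hs3 F.p3 F.hp3 F.hA3 F.hS3 (fun x hx => Or.inr (Or.inr hx)) h

lemma third_elem (hSfin : S.Finite) (hS3 : S.ncard = 3) {a b : V} (ha : a ∈ S) (hb : b ∈ S) (hab : a ≠ b) :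
    ∃ r, r ∈ S ∧ r ≠ a ∧ r ≠ b := by
  by_contra h
  push_neg at h
  have hsub : S ⊆ {a, b} := by
    intro r hr
    by_cases hra : r = a
    · exact Or.inl hra
    · exact Or.inr (h r hr hra)
  have h1 := Set.ncard_le_ncard hsub ((Set.finite_singleton b).insert a)
  have h2 : ({a, b} : Set V).ncard ≤ 2 :=
    le_trans (Set.ncard_insert_le _ _) (by rw [Set.ncard_singleton])
  omega

lemma mem_of_three (hSfin : S.Finite) (hS3 : S.ncard = 3) {a b c' : V} (ha : a ∈ S) (hb : b ∈ S) (hc : c' ∈ S)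
    (hab : a ≠ b) (hac : a ≠ c') (hbc : b ≠ c') {x : V} (hx : x ∈ S) :
    x = a ∨ x = b ∨ x = c' := by
  by_contra hcon
  push_neg at hcon
  obtain ⟨hxa, hxb, hxc⟩ := hcon
  have hsub : {a, b, c', x} ⊆ S := by
    intro w hw
    simp only [Set.mem_insert_iff, Set.mem_singleton_iff] at hw
    rcases hw with rfl | rfl | rfl | rfl
    exacts [ha, hb, hc, hx]
  have hcard : ({a, b, c', x} : Set V).ncard = 4 := by
    rw [Set.ncard_insert_of_notMem, Set.ncard_insert_of_notMem,
      Set.ncard_insert_of_notMem, Set.ncard_singleton]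
    · simp only [Set.mem_singleton_iff]; exact fun h => hxc h.symm
    · simp only [Set.mem_insert_iff, Set.mem_singleton_iff, not_or]
      exact ⟨hbc, fun h => hxb h.symm⟩
    · simp only [Set.mem_insert_iff, Set.mem_singleton_iff, not_or]
      exact ⟨hab, hac, fun h => hxa h.symm⟩
  have := Set.ncard_le_ncard hsub (hSfin)
  omega

end Helpers4
section Helpers5
variable {V : Type*} {G : SimpleGraph V} {S C1 C2 : Set V} {c1 c2 : V}

/-- Escape from `C` to `S` avoiding a 2-set `D` that contains `T ∩ C`. -/
lemma escape_reach (hG : KConnected 3 G) {C T D : Set V}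
    (hclose : ∀ p ∈ C, ∀ q, G.Adj p q → q ∈ C ∪ S)
    (hD2 : D.ncard ≤ 2) (hDsub : D ⊆ C ∪ S)
    (hTC : ∀ x ∈ T, x ∈ C → x ∈ D)
    {c0 : V} (hc0C : c0 ∉ C) (hc0S : c0 ∉ S)
    {p : V} (hp : p ∈ C) (hpD : p ∉ D) :
    ∃ s0 k : V, s0 ∈ S ∧ s0 ∉ D ∧ k ∈ C ∧ k ∉ D ∧ G.Adj k s0 ∧ ReachAvoid G T p k := by
  obtain ⟨s0, k, hs0S, hs0D, hkC, hadj, w, hw⟩ := escape hG hclose hD2 hDsub hc0C hc0S hp hpD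
  have hkD : k ∉ D := (hw k (Walk.end_mem_support _)).2
  refine ⟨s0, k, hs0S, hs0D, hkC, hkD, hadj, ⟨w, fun x hx hxT => ?_⟩⟩
  obtain ⟨hxC, hxD⟩ := hw x hx
  exact hxD (hTC x hxT hxC)

lemma cross_cut (hG : KConnected 3 G)
    (h1close : ∀ p ∈ C1, ∀ q, G.Adj p q → q ∈ C1 ∪ S)
    (h2close : ∀ p ∈ C2, ∀ q, G.Adj p q → q ∈ C2 ∪ S)
    (h1S : ∀ x ∈ C1, x ∉ S) (h2S : ∀ x ∈ C2, x ∉ S)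
    (hdisj : ∀ x, x ∈ C1 → x ∉ C2)
    (hcov : ∀ p : V, p ∈ C1 ∨ p ∈ C2 ∨ p ∈ S)
    (F1 : Fan3 G (C1 ∪ S) c1 S) (F2 : Fan3 G (C2 ∪ S) c2 S)
    (hc1 : c1 ∈ C1) (hc2 : c2 ∈ C2)
    {w1 w2 t : V} (hw1 : w1 ∈ C1) (hw1F : w1 ∉ F1.verts)
    (hw2 : w2 ∈ C2) (hw2F : w2 ∉ F2.verts) :
    ∀ a b, a ∉ ({w1, w2, t} : Set V) → b ∉ ({w1, w2, t} : Set V) →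
      ReachAvoid G {w1, w2, t} a b := by
  set T : Set V := {w1, w2, t} with hT
  have hmemT : ∀ x, x ∈ T ↔ x = w1 ∨ x = w2 ∨ x = t := by
    intro x; simp [hT]
  have hc1w2 : c1 ∉ C2 := hdisj c1 hc1
  have hc2C1 : c2 ∉ C1 := fun h => hdisj c2 h hc2
  have hc1S : c1 ∉ S := h1S c1 hc1
  have hc2S : c2 ∉ S := h2S c2 hc2
  have hstar : ∃ hub, hub ∉ T ∧ ∀ a, a ∉ T → ReachAvoid G T a hub := by
    rcases hcov t with htC1 | htC2 | htS
    · -- t ∈ C1 : use hub c2 and fan F2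
      have hc2T : c2 ∉ T := by
        rw [hmemT]
        push_neg
        exact ⟨fun h => hdisj w1 hw1 (h ▸ hc2), fun h => hw2F (h ▸ fan_c_mem F2),
          fun h => hdisj t htC1 (h ▸ hc2)⟩
      have hSreach : ∀ s ∈ S, ReachAvoid G T s c2 := by
        intro s hs
        obtain ⟨pw, _, hv, hA, _⟩ := fan_path F2 hs
        refine ReachAvoid.symm ⟨pw, fun x hx hxT => ?_⟩
        rcases (hmemT x).1 hxT with rfl | rfl | rfl
        · rcases hA x hx with h | h
          · exact hdisj x hw1 h
          · exact h1S x hw1 h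
        · exact hw2F (hv x hx)
        · rcases hA x hx with h | h
          · exact hdisj x htC1 h
          · exact h1S x htC1 h
      refine ⟨c2, hc2T, fun a haT => ?_⟩
      rcases hcov a with haC | haC | haS
      · -- a ∈ C1
        have hpD : a ∉ ({w1, t} : Set V) := by
          intro h
          rcases h with rfl | rfl
          · exact haT ((hmemT a).2 (Or.inl rfl))
          · exact haT ((hmemT a).2 (Or.inr (Or.inr rfl)))
        obtain ⟨s0, k, hs0S, hs0D, hkC, hkD, hadj, hreach⟩ :=
          escape_reach hG h1close (le_trans (Set.ncard_insert_le _ _) (by simp))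
            (by rintro x (rfl | rfl); exacts [Or.inl hw1, Or.inl htC1])
            (by
              intro x hxT hxC
              rcases (hmemT x).1 hxT with rfl | rfl | rfl
              · exact Or.inl rfl
              · exact absurd hxC (fun h => hdisj x h hw2)
              · exact Or.inr rfl)
            hc2C1 hc2S haC hpD
        have hkT : k ∉ T := by
          rw [hmemT]; push_neg
          refine ⟨fun h => hkD (h ▸ Or.inl rfl), fun h => hdisj k hkC (h ▸ hw2),
            fun h => hkD (h ▸ Or.inr rfl)⟩
        have hs0T : s0 ∉ T := by
          rw [hmemT]; push_neg
          exact ⟨fun h => h1S w1 hw1 (h ▸ hs0S), fun h => h2S w2 hw2 (h ▸ hs0S),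
            fun h => h1S t htC1 (h ▸ hs0S)⟩
        exact (hreach.trans (ReachAvoid.of_adj hadj hkT hs0T)).trans (hSreach s0 hs0S)
      · -- a ∈ C2
        have hpD : a ∉ ({w2} : Set V) := by
          intro h
          rcases h with rfl
          exact haT ((hmemT a).2 (Or.inr (Or.inl rfl)))
        obtain ⟨s0, k, hs0S, hs0D, hkC, hkD, hadj, hreach⟩ :=
          escape_reach hG h2close (by simp)
            (by rintro x rfl; exact Or.inl hw2)
            (by
              intro x hxT hxC
              rcases (hmemT x).1 hxT with rfl | rfl | rfl
              · exact absurd hxC (hdisj x hw1)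
              · exact rfl
              · exact absurd hxC (hdisj x htC1))
            hc1w2 hc1S haC hpD
        have hkT : k ∉ T := by
          rw [hmemT]; push_neg
          refine ⟨fun h => hdisj k (h ▸ hw1) hkC, fun h => hkD (h ▸ rfl),
            fun h => hdisj k (h ▸ htC1) hkC⟩
        have hs0T : s0 ∉ T := by
          rw [hmemT]; push_neg
          exact ⟨fun h => h1S w1 hw1 (h ▸ hs0S), fun h => h2S w2 hw2 (h ▸ hs0S),
            fun h => h1S t htC1 (h ▸ hs0S)⟩
        exact (hreach.trans (ReachAvoid.of_adj hadj hkT hs0T)).trans (hSreach s0 hs0S)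
      · exact hSreach a haS
    · -- t ∈ C2 : use hub c1 and fan F1
      have hc1T : c1 ∉ T := by
        rw [hmemT]; push_neg
        exact ⟨fun h => hw1F (h ▸ fan_c_mem F1), fun h => hdisj c1 hc1 (h ▸ hw2),
          fun h => hdisj c1 hc1 (h ▸ htC2)⟩
      have hSreach : ∀ s ∈ S, ReachAvoid G T s c1 := by
        intro s hs
        obtain ⟨pw, _, hv, hA, _⟩ := fan_path F1 hs
        refine ReachAvoid.symm ⟨pw, fun x hx hxT => ?_⟩
        rcases (hmemT x).1 hxT with rfl | rfl | rfl
        · exact hw1F (hv x hx)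
        · rcases hA x hx with h | h
          · exact hdisj x h hw2
          · exact h2S x hw2 h
        · rcases hA x hx with h | h
          · exact hdisj x h htC2
          · exact h2S x htC2 h
      refine ⟨c1, hc1T, fun a haT => ?_⟩
      rcases hcov a with haC | haC | haS
      · -- a ∈ C1
        have hpD : a ∉ ({w1} : Set V) := by
          intro h; rcases h with rfl
          exact haT ((hmemT a).2 (Or.inl rfl))
        obtain ⟨s0, k, hs0S, hs0D, hkC, hkD, hadj, hreach⟩ :=
          escape_reach hG h1close (by simp)
            (by rintro x rfl; exact Or.inl hw1)
            (by
              intro x hxT hxC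
              rcases (hmemT x).1 hxT with rfl | rfl | rfl
              · exact rfl
              · exact absurd hxC (fun h => hdisj x h hw2)
              · exact absurd hxC (fun h => hdisj x h htC2))
            hc2C1 hc2S haC hpD
        have hkT : k ∉ T := by
          rw [hmemT]; push_neg
          exact ⟨fun h => hkD (h ▸ rfl), fun h => hdisj k hkC (h ▸ hw2),
            fun h => hdisj k hkC (h ▸ htC2)⟩
        have hs0T : s0 ∉ T := by
          rw [hmemT]; push_neg
          exact ⟨fun h => h1S w1 hw1 (h ▸ hs0S), fun h => h2S w2 hw2 (h ▸ hs0S),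
            fun h => h2S t htC2 (h ▸ hs0S)⟩
        exact (hreach.trans (ReachAvoid.of_adj hadj hkT hs0T)).trans (hSreach s0 hs0S)
      · -- a ∈ C2
        have hpD : a ∉ ({w2, t} : Set V) := by
          intro h
          rcases h with rfl | rfl
          · exact haT ((hmemT a).2 (Or.inr (Or.inl rfl)))
          · exact haT ((hmemT a).2 (Or.inr (Or.inr rfl)))
        obtain ⟨s0, k, hs0S, hs0D, hkC, hkD, hadj, hreach⟩ :=
          escape_reach hG h2close (le_trans (Set.ncard_insert_le _ _) (by simp))
            (by rintro x (rfl | rfl); exacts [Or.inl hw2, Or.inl htC2])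
            (by
              intro x hxT hxC
              rcases (hmemT x).1 hxT with rfl | rfl | rfl
              · exact absurd hxC (hdisj x hw1)
              · exact Or.inl rfl
              · exact Or.inr rfl)
            hc1w2 hc1S haC hpD
        have hkT : k ∉ T := by
          rw [hmemT]; push_neg
          exact ⟨fun h => hdisj k (h ▸ hw1) hkC, fun h => hkD (h ▸ Or.inl rfl),
            fun h => hkD (h ▸ Or.inr rfl)⟩
        have hs0T : s0 ∉ T := by
          rw [hmemT]; push_neg
          exact ⟨fun h => h1S w1 hw1 (h ▸ hs0S), fun h => h2S w2 hw2 (h ▸ hs0S),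
            fun h => h2S t htC2 (h ▸ hs0S)⟩
        exact (hreach.trans (ReachAvoid.of_adj hadj hkT hs0T)).trans (hSreach s0 hs0S)
      · exact hSreach a haS
    · -- t ∈ S : use hub c1 and the two fan paths of F1 missing t
      have hc1T : c1 ∉ T := by
        rw [hmemT]; push_neg
        exact ⟨fun h => hw1F (h ▸ fan_c_mem F1), fun h => hdisj c1 hc1 (h ▸ hw2),
          fun h => hc1S (h ▸ htS)⟩
      have hSreach : ∀ s ∈ S, s ≠ t → ReachAvoid G T s c1 := by
        intro s hs hst
        obtain ⟨pw, _, hv, hA, hSs⟩ := fan_path F1 hs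
        refine ReachAvoid.symm ⟨pw, fun x hx hxT => ?_⟩
        rcases (hmemT x).1 hxT with rfl | rfl | rfl
        · exact hw1F (hv x hx)
        · rcases hA x hx with h | h
          · exact hdisj x h hw2
          · exact h2S x hw2 h
        · exact hst ((hSs x hx htS).symm ▸ rfl)
      refine ⟨c1, hc1T, fun a haT => ?_⟩
      rcases hcov a with haC | haC | haS
      · -- a ∈ C1
        have hpD : a ∉ ({w1, t} : Set V) := by
          intro h
          rcases h with rfl | rfl
          · exact haT ((hmemT a).2 (Or.inl rfl))
          · exact haT ((hmemT a).2 (Or.inr (Or.inr rfl)))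
        obtain ⟨s0, k, hs0S, hs0D, hkC, hkD, hadj, hreach⟩ :=
          escape_reach hG h1close (le_trans (Set.ncard_insert_le _ _) (by simp))
            (by rintro x (rfl | rfl); exacts [Or.inl hw1, Or.inr htS])
            (by
              intro x hxT hxC
              rcases (hmemT x).1 hxT with rfl | rfl | rfl
              · exact Or.inl rfl
              · exact absurd hxC (fun h => hdisj x h hw2)
              · exact Or.inr rfl)
            hc2C1 hc2S haC hpD
        have hkT : k ∉ T := by
          rw [hmemT]; push_neg
          exact ⟨fun h => hkD (h ▸ Or.inl rfl), fun h => hdisj k hkC (h ▸ hw2),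
            fun h => hkD (h ▸ Or.inr rfl)⟩
        have hs0T : s0 ∉ T := by
          rw [hmemT]; push_neg
          exact ⟨fun h => h1S w1 hw1 (h ▸ hs0S), fun h => h2S w2 hw2 (h ▸ hs0S),
            fun h => hs0D (h ▸ Or.inr rfl)⟩
        have hs0t : s0 ≠ t := fun h => hs0D (h ▸ Or.inr rfl)
        exact (hreach.trans (ReachAvoid.of_adj hadj hkT hs0T)).trans
          (hSreach s0 hs0S hs0t)
      · -- a ∈ C2
        have hpD : a ∉ ({w2, t} : Set V) := by
          intro h
          rcases h with rfl | rfl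
          · exact haT ((hmemT a).2 (Or.inr (Or.inl rfl)))
          · exact haT ((hmemT a).2 (Or.inr (Or.inr rfl)))
        obtain ⟨s0, k, hs0S, hs0D, hkC, hkD, hadj, hreach⟩ :=
          escape_reach hG h2close (le_trans (Set.ncard_insert_le _ _) (by simp))
            (by rintro x (rfl | rfl); exacts [Or.inl hw2, Or.inr htS])
            (by
              intro x hxT hxC
              rcases (hmemT x).1 hxT with rfl | rfl | rfl
              · exact absurd hxC (hdisj x hw1)
              · exact Or.inl rfl
              · exact Or.inr rfl)
            hc1w2 hc1S haC hpD
        have hkT : k ∉ T := by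
          rw [hmemT]; push_neg
          exact ⟨fun h => hdisj k (h ▸ hw1) hkC, fun h => hkD (h ▸ Or.inl rfl),
            fun h => hkD (h ▸ Or.inr rfl)⟩
        have hs0T : s0 ∉ T := by
          rw [hmemT]; push_neg
          exact ⟨fun h => h1S w1 hw1 (h ▸ hs0S), fun h => h2S w2 hw2 (h ▸ hs0S),
            fun h => hs0D (h ▸ Or.inr rfl)⟩
        have hs0t : s0 ≠ t := fun h => hs0D (h ▸ Or.inr rfl)
        exact (hreach.trans (ReachAvoid.of_adj hadj hkT hs0T)).trans
          (hSreach s0 hs0S hs0t)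
      · -- a ∈ S
        have hat : a ≠ t := fun h => haT ((hmemT a).2 (Or.inr (Or.inr h)))
        exact hSreach a haS hat
  obtain ⟨hub, hhubT, hstar⟩ := hstar
  intro a b ha hb
  exact (hstar a ha).trans (hstar b hb).symm

end Helpers5
section Helpers6
variable {V : Type*} {G : SimpleGraph V} {S C1 C2 : Set V} {c1 c2 : V}

lemma fan_two_paths {A : Set V} {c : V} (F : Fan3 G A c S) {p q : V}
    (hp : p ∈ S) (hq : q ∈ S) (hpq : p ≠ q) :
    ∃ (wp : G.Walk c p) (wq : G.Walk c q),
      (∀ x ∈ wp.support, x ∈ F.verts) ∧ (∀ x ∈ wp.support, x ∈ A) ∧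
      (∀ x ∈ wp.support, x ∈ S → x = p) ∧
      (∀ x ∈ wq.support, x ∈ F.verts) ∧ (∀ x ∈ wq.support, x ∈ A) ∧
      (∀ x ∈ wq.support, x ∈ S → x = q) ∧
      (∀ x ∈ wp.support, x ∈ wq.support → x = c) := by
  rw [F.hS] at hp hq
  simp only [Set.mem_insert_iff, Set.mem_singleton_iff] at hp hq
  rcases hp with rfl | rfl | rfl <;> rcases hq with rfl | rfl | rfl
  · exact absurd rfl hpq
  · exact ⟨F.p1, F.p2, fun x hx => Or.inl hx, F.hA1, F.hS1,
      fun x hx => Or.inr (Or.inl hx), F.hA2, F.hS2, F.hI12⟩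
  · exact ⟨F.p1, F.p3, fun x hx => Or.inl hx, F.hA1, F.hS1,
      fun x hx => Or.inr (Or.inr hx), F.hA3, F.hS3, F.hI13⟩
  · exact ⟨F.p2, F.p1, fun x hx => Or.inr (Or.inl hx), F.hA2, F.hS2,
      fun x hx => Or.inl hx, F.hA1, F.hS1, fun x h1 h2 => F.hI12 x h2 h1⟩
  · exact absurd rfl hpq
  · exact ⟨F.p2, F.p3, fun x hx => Or.inr (Or.inl hx), F.hA2, F.hS2,
      fun x hx => Or.inr (Or.inr hx), F.hA3, F.hS3, F.hI23⟩
  · exact ⟨F.p3, F.p1, fun x hx => Or.inr (Or.inr hx), F.hA3, F.hS3,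
      fun x hx => Or.inl hx, F.hA1, F.hS1, fun x h1 h2 => F.hI13 x h2 h1⟩
  · exact ⟨F.p3, F.p2, fun x hx => Or.inr (Or.inr hx), F.hA3, F.hS3,
      fun x hx => Or.inr (Or.inl hx), F.hA2, F.hS2, fun x h1 h2 => F.hI23 x h2 h1⟩
  · exact absurd rfl hpq

/-- Cut analysis for the pair `{c1, w2}` when every vertex of `S` has a
`C1`-neighbour besides `c1`. -/
lemma center_cut (hG : KConnected 3 G) (hSfin : S.Finite) (hS3 : S.ncard = 3)
    (h1close : ∀ p ∈ C1, ∀ q, G.Adj p q → q ∈ C1 ∪ S)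
    (h2close : ∀ p ∈ C2, ∀ q, G.Adj p q → q ∈ C2 ∪ S)
    (h1S : ∀ x ∈ C1, x ∉ S) (h2S : ∀ x ∈ C2, x ∉ S)
    (hdisj : ∀ x, x ∈ C1 → x ∉ C2)
    (hcov : ∀ p : V, p ∈ C1 ∨ p ∈ C2 ∨ p ∈ S)
    (F2 : Fan3 G (C2 ∪ S) c2 S) (hc1 : c1 ∈ C1) (hc2 : c2 ∈ C2)
    {w2 t : V} (hw2 : w2 ∈ C2) (hw2F : w2 ∉ F2.verts)
    (hSnb : ∀ s ∈ S, ∃ k, k ∈ C1 ∧ k ≠ c1 ∧ G.Adj k s) :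
    ∀ a b, a ∉ ({c1, w2, t} : Set V) → b ∉ ({c1, w2, t} : Set V) →
      ReachAvoid G {c1, w2, t} a b := by
  set T : Set V := {c1, w2, t} with hT
  have hmemT : ∀ x, x ∈ T ↔ x = c1 ∨ x = w2 ∨ x = t := by intro x; simp [hT]
  have hc1S : c1 ∉ S := h1S c1 hc1
  have hc2S : c2 ∉ S := h2S c2 hc2
  have hc1C2 : c1 ∉ C2 := hdisj c1 hc1
  have hc2C1 : c2 ∉ C1 := fun h => hdisj c2 h hc2
  have hstar : ∃ hub, hub ∉ T ∧ ∀ a, a ∉ T → ReachAvoid G T a hub := by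
    rcases hcov t with htC1 | htC2 | htS
    · -- t ∈ C1 : hub c2, fan F2 intact
      have hc2T : c2 ∉ T := by
        rw [hmemT]; push_neg
        exact ⟨fun h => hc2C1 (h ▸ hc1), fun h => hw2F (h ▸ fan_c_mem F2),
          fun h => hdisj t htC1 (h ▸ hc2)⟩
      have hSreach : ∀ s ∈ S, ReachAvoid G T s c2 := by
        intro s hs
        obtain ⟨pw, _, hv, hA, _⟩ := fan_path F2 hs
        refine ReachAvoid.symm ⟨pw, fun x hx hxT => ?_⟩
        rcases (hmemT x).1 hxT with rfl | rfl | rfl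
        · rcases hA x hx with h | h
          · exact hdisj x hc1 h
          · exact hc1S h
        · exact hw2F (hv x hx)
        · rcases hA x hx with h | h
          · exact hdisj x htC1 h
          · exact h1S x htC1 h
      refine ⟨c2, hc2T, fun a haT => ?_⟩
      rcases hcov a with haC | haC | haS
      · have hpD : a ∉ ({c1, t} : Set V) := by
          rintro (rfl | rfl)
          · exact haT ((hmemT a).2 (Or.inl rfl))
          · exact haT ((hmemT a).2 (Or.inr (Or.inr rfl)))
        obtain ⟨s0, k, hs0S, hs0D, hkC, hkD, hadj, hreach⟩ :=
          escape_reach hG h1close (le_trans (Set.ncard_insert_le _ _) (by simp))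
            (by rintro x (rfl | rfl); exacts [Or.inl hc1, Or.inl htC1])
            (by
              intro x hxT hxC
              rcases (hmemT x).1 hxT with rfl | rfl | rfl
              · exact Or.inl rfl
              · exact absurd hxC (fun h => hdisj x h hw2)
              · exact Or.inr rfl)
            hc2C1 hc2S haC hpD
        have hkT : k ∉ T := by
          rw [hmemT]; push_neg
          exact ⟨fun h => hkD (h ▸ Or.inl rfl), fun h => hdisj k hkC (h ▸ hw2),
            fun h => hkD (h ▸ Or.inr rfl)⟩
        have hs0T : s0 ∉ T := by
          rw [hmemT]; push_neg
          exact ⟨fun h => hc1S (h ▸ hs0S), fun h => h2S w2 hw2 (h ▸ hs0S),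
            fun h => h1S t htC1 (h ▸ hs0S)⟩
        exact (hreach.trans (ReachAvoid.of_adj hadj hkT hs0T)).trans (hSreach s0 hs0S)
      · have hpD : a ∉ ({w2} : Set V) := by
          rintro rfl
          exact haT ((hmemT a).2 (Or.inr (Or.inl rfl)))
        obtain ⟨s0, k, hs0S, hs0D, hkC, hkD, hadj, hreach⟩ :=
          escape_reach hG h2close (by simp)
            (by rintro x rfl; exact Or.inl hw2)
            (by
              intro x hxT hxC
              rcases (hmemT x).1 hxT with rfl | rfl | rfl
              · exact absurd hxC hc1C2
              · exact rfl
              · exact absurd hxC (hdisj x htC1))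
            hc1C2 hc1S haC hpD
        have hkT : k ∉ T := by
          rw [hmemT]; push_neg
          exact ⟨fun h => hc1C2 (h ▸ hkC), fun h => hkD (h ▸ rfl),
            fun h => hdisj k (h ▸ htC1) hkC⟩
        have hs0T : s0 ∉ T := by
          rw [hmemT]; push_neg
          exact ⟨fun h => hc1S (h ▸ hs0S), fun h => h2S w2 hw2 (h ▸ hs0S),
            fun h => h1S t htC1 (h ▸ hs0S)⟩
        exact (hreach.trans (ReachAvoid.of_adj hadj hkT hs0T)).trans (hSreach s0 hs0S)
      · exact hSreach a haS
    · -- t ∈ C2 : pairing argument through S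
      have hSinT : ∀ s ∈ S, s ∉ T := by
        intro s hs
        rw [hmemT]; push_neg
        exact ⟨fun h => hc1S (h ▸ hs), fun h => h2S w2 hw2 (h ▸ hs),
          fun h => h2S t htC2 (h ▸ hs)⟩
      have hpairAux : ∀ s ∈ S, ∃ s0, s0 ∈ S ∧ s0 ≠ s ∧ ReachAvoid G T s s0 := by
        intro s hs
        obtain ⟨k, hkC, hkc1, hadjks⟩ := hSnb s hs
        have hkD : k ∉ ({c1, s} : Set V) := by
          rintro (rfl | rfl)
          · exact hkc1 rfl
          · exact h1S k hkC hs
        obtain ⟨s0, k', hs0S, hs0D, hk'C, hk'D, hadj, hreach⟩ :=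
          escape_reach hG h1close (le_trans (Set.ncard_insert_le _ _) (by simp))
            (by rintro x (rfl | rfl); exacts [Or.inl hc1, Or.inr hs])
            (by
              intro x hxT hxC
              rcases (hmemT x).1 hxT with rfl | rfl | rfl
              · exact Or.inl rfl
              · exact absurd hxC (fun h => hdisj x h hw2)
              · exact absurd hxC (fun h => hdisj x h htC2))
            hc2C1 hc2S hkC hkD
        have hkT : k ∉ T := by
          rw [hmemT]; push_neg
          exact ⟨hkc1, fun h => hdisj k hkC (h ▸ hw2), fun h => hdisj k hkC (h ▸ htC2)⟩
        have hk'T : k' ∉ T := by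
          rw [hmemT]; push_neg
          exact ⟨fun h => hk'D (h ▸ Or.inl rfl), fun h => hdisj k' hk'C (h ▸ hw2),
            fun h => hdisj k' hk'C (h ▸ htC2)⟩
        have hs0s : s0 ≠ s := fun h => hs0D (h ▸ Or.inr rfl)
        refine ⟨s0, hs0S, hs0s, ?_⟩
        exact ((ReachAvoid.of_adj hadjks.symm (hSinT s hs) hkT).trans hreach).trans
          (ReachAvoid.of_adj hadj hk'T (hSinT s0 hs0S))
      have hpair : ∀ s s', s ∈ S → s' ∈ S → ReachAvoid G T s s' := by
        intro s s' hs hs'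
        by_cases hss' : s = s'
        · exact hss' ▸ ReachAvoid.refl (hSinT s hs)
        · obtain ⟨σ, hσS, hσs, hreachσ⟩ := hpairAux s hs
          by_cases hσ : σ = s'
          · exact hσ ▸ hreachσ
          · obtain ⟨τ, hτS, hτs', hreachτ⟩ := hpairAux s' hs'
            have hτ : τ = s ∨ τ = s' ∨ τ = σ :=
              mem_of_three hSfin hS3 hs hs' hσS hss' (fun h => hσs h.symm)
                (fun h => hσ h.symm) hτS
            rcases hτ with rfl | rfl | rfl
            · exact hreachτ.symm
            · exact absurd rfl hτs'
            · exact hreachσ.trans hreachτ.symm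
      refine ⟨F2.s1, hSinT F2.s1 (by
        have h : F2.s1 ∈ ({F2.s1, F2.s2, F2.s3} : Set V) := by simp
        rwa [← F2.hS] at h), fun a haT => ?_⟩
      have hs1S : F2.s1 ∈ S := by
        have h : F2.s1 ∈ ({F2.s1, F2.s2, F2.s3} : Set V) := by simp
        rwa [← F2.hS] at h
      rcases hcov a with haC | haC | haS
      · have hpD : a ∉ ({c1} : Set V) := by
          rintro rfl
          exact haT ((hmemT a).2 (Or.inl rfl))
        obtain ⟨s0, k, hs0S, hs0D, hkC, hkD, hadj, hreach⟩ :=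
          escape_reach hG h1close (by simp)
            (by rintro x rfl; exact Or.inl hc1)
            (by
              intro x hxT hxC
              rcases (hmemT x).1 hxT with rfl | rfl | rfl
              · exact rfl
              · exact absurd hxC (fun h => hdisj x h hw2)
              · exact absurd hxC (fun h => hdisj x h htC2))
            hc2C1 hc2S haC hpD
        have hkT : k ∉ T := by
          rw [hmemT]; push_neg
          exact ⟨fun h => hkD (h ▸ rfl), fun h => hdisj k hkC (h ▸ hw2),
            fun h => hdisj k hkC (h ▸ htC2)⟩
        exact (hreach.trans (ReachAvoid.of_adj hadj hkT (hSinT s0 hs0S))).trans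
          (hpair s0 F2.s1 hs0S hs1S)
      · have hpD : a ∉ ({w2, t} : Set V) := by
          rintro (rfl | rfl)
          · exact haT ((hmemT a).2 (Or.inr (Or.inl rfl)))
          · exact haT ((hmemT a).2 (Or.inr (Or.inr rfl)))
        obtain ⟨s0, k, hs0S, hs0D, hkC, hkD, hadj, hreach⟩ :=
          escape_reach hG h2close (le_trans (Set.ncard_insert_le _ _) (by simp))
            (by rintro x (rfl | rfl); exacts [Or.inl hw2, Or.inl htC2])
            (by
              intro x hxT hxC
              rcases (hmemT x).1 hxT with rfl | rfl | rfl
              · exact absurd hxC hc1C2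
              · exact Or.inl rfl
              · exact Or.inr rfl)
            hc1C2 hc1S haC hpD
        have hkT : k ∉ T := by
          rw [hmemT]; push_neg
          exact ⟨fun h => hc1C2 (h ▸ hkC), fun h => hkD (h ▸ Or.inl rfl),
            fun h => hkD (h ▸ Or.inr rfl)⟩
        exact (hreach.trans (ReachAvoid.of_adj hadj hkT (hSinT s0 hs0S))).trans
          (hpair s0 F2.s1 hs0S hs1S)
      · exact hpair a F2.s1 haS hs1S
    · -- t ∈ S : hub c2, two fan paths of F2
      have hc2T : c2 ∉ T := by
        rw [hmemT]; push_neg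
        exact ⟨fun h => hc2C1 (h ▸ hc1), fun h => hw2F (h ▸ fan_c_mem F2),
          fun h => hc2S (h ▸ htS)⟩
      have hSreach : ∀ s ∈ S, s ≠ t → ReachAvoid G T s c2 := by
        intro s hs hst
        obtain ⟨pw, _, hv, hA, hSs⟩ := fan_path F2 hs
        refine ReachAvoid.symm ⟨pw, fun x hx hxT => ?_⟩
        rcases (hmemT x).1 hxT with rfl | rfl | rfl
        · rcases hA x hx with h | h
          · exact hdisj x hc1 h
          · exact hc1S h
        · exact hw2F (hv x hx)
        · exact hst ((hSs x hx htS).symm ▸ rfl)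
      refine ⟨c2, hc2T, fun a haT => ?_⟩
      rcases hcov a with haC | haC | haS
      · have hpD : a ∉ ({c1, t} : Set V) := by
          rintro (rfl | rfl)
          · exact haT ((hmemT a).2 (Or.inl rfl))
          · exact haT ((hmemT a).2 (Or.inr (Or.inr rfl)))
        obtain ⟨s0, k, hs0S, hs0D, hkC, hkD, hadj, hreach⟩ :=
          escape_reach hG h1close (le_trans (Set.ncard_insert_le _ _) (by simp))
            (by rintro x (rfl | rfl); exacts [Or.inl hc1, Or.inr htS])
            (by
              intro x hxT hxC
              rcases (hmemT x).1 hxT with rfl | rfl | rfl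
              · exact Or.inl rfl
              · exact absurd hxC (fun h => hdisj x h hw2)
              · exact Or.inr rfl)
            hc2C1 hc2S haC hpD
        have hkT : k ∉ T := by
          rw [hmemT]; push_neg
          exact ⟨fun h => hkD (h ▸ Or.inl rfl), fun h => hdisj k hkC (h ▸ hw2),
            fun h => hkD (h ▸ Or.inr rfl)⟩
        have hs0T : s0 ∉ T := by
          rw [hmemT]; push_neg
          exact ⟨fun h => hc1S (h ▸ hs0S), fun h => h2S w2 hw2 (h ▸ hs0S),
            fun h => hs0D (h ▸ Or.inr rfl)⟩
        exact (hreach.trans (ReachAvoid.of_adj hadj hkT hs0T)).trans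
          (hSreach s0 hs0S (fun h => hs0D (h ▸ Or.inr rfl)))
      · have hpD : a ∉ ({w2, t} : Set V) := by
          rintro (rfl | rfl)
          · exact haT ((hmemT a).2 (Or.inr (Or.inl rfl)))
          · exact haT ((hmemT a).2 (Or.inr (Or.inr rfl)))
        obtain ⟨s0, k, hs0S, hs0D, hkC, hkD, hadj, hreach⟩ :=
          escape_reach hG h2close (le_trans (Set.ncard_insert_le _ _) (by simp))
            (by rintro x (rfl | rfl); exacts [Or.inl hw2, Or.inr htS])
            (by
              intro x hxT hxC
              rcases (hmemT x).1 hxT with rfl | rfl | rfl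
              · exact absurd hxC hc1C2
              · exact Or.inl rfl
              · exact Or.inr rfl)
            hc1C2 hc1S haC hpD
        have hkT : k ∉ T := by
          rw [hmemT]; push_neg
          exact ⟨fun h => hc1C2 (h ▸ hkC), fun h => hkD (h ▸ Or.inl rfl),
            fun h => hkD (h ▸ Or.inr rfl)⟩
        have hs0T : s0 ∉ T := by
          rw [hmemT]; push_neg
          exact ⟨fun h => hc1S (h ▸ hs0S), fun h => h2S w2 hw2 (h ▸ hs0S),
            fun h => hs0D (h ▸ Or.inr rfl)⟩
        exact (hreach.trans (ReachAvoid.of_adj hadj hkT hs0T)).trans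
          (hSreach s0 hs0S (fun h => hs0D (h ▸ Or.inr rfl)))
      · exact hSreach a haS (fun h => haT ((hmemT a).2 (Or.inr (Or.inr h))))
  obtain ⟨hub, hhubT, hstar⟩ := hstar
  intro a b ha hb
  exact (hstar a ha).trans (hstar b hb).symm

end Helpers6
section Helpers7
variable {V : Type*} {G : SimpleGraph V} {S C1 C2 : Set V} {c1 c2 : V}

/-- Cut analysis for the pair `{w1, s'}` where `s'` is a vertex of `S` whose only
possible neighbour in `C1` is `c1`, in the case where the fan `F1` covers all of
`C1` except `w1`. -/
lemma sprime_cut (hG : KConnected 3 G) (hSfin : S.Finite) (hS3 : S.ncard = 3)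
    (h1close : ∀ p ∈ C1, ∀ q, G.Adj p q → q ∈ C1 ∪ S)
    (h2close : ∀ p ∈ C2, ∀ q, G.Adj p q → q ∈ C2 ∪ S)
    (h1S : ∀ x ∈ C1, x ∉ S) (h2S : ∀ x ∈ C2, x ∉ S)
    (hdisj : ∀ x, x ∈ C1 → x ∉ C2)
    (hcov : ∀ p : V, p ∈ C1 ∨ p ∈ C2 ∨ p ∈ S)
    (F1 : Fan3 G (C1 ∪ S) c1 S) (F2 : Fan3 G (C2 ∪ S) c2 S)
    (hc1 : c1 ∈ C1) (hc2 : c2 ∈ C2)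
    (h2conn : (G.induce C2).Connected)
    {w1 : V} (hw1 : w1 ∈ C1) (hw1F : w1 ∉ F1.verts)
    (huniq1 : ∀ w ∈ C1, w ∉ F1.verts → w = w1)
    {s' : V} (hs'S : s' ∈ S) (hs'nb : ∀ k ∈ C1, G.Adj k s' → k = c1)
    {t : V} (hts' : t ≠ s') :
    ∀ a b, a ∉ ({w1, s', t} : Set V) → b ∉ ({w1, s', t} : Set V) →
      ReachAvoid G {w1, s', t} a b := by
  set T : Set V := {w1, s', t} with hT
  have hmemT : ∀ x, x ∈ T ↔ x = w1 ∨ x = s' ∨ x = t := by intro x; simp [hT]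
  have hc1S : c1 ∉ S := h1S c1 hc1
  have hc2S : c2 ∉ S := h2S c2 hc2
  have hc1C2 : c1 ∉ C2 := hdisj c1 hc1
  have hc2C1 : c2 ∉ C1 := fun h => hdisj c2 h hc2
  have hc1w1 : c1 ≠ w1 := fun h => hw1F (h ▸ fan_c_mem F1)
  have hstar : ∃ hub, hub ∉ T ∧ ∀ a, a ∉ T → ReachAvoid G T a hub := by
    rcases hcov t with htC1 | htC2 | htS
    · -- t ∈ C1 : the delicate case; hub c2
      have hc2T : c2 ∉ T := by
        rw [hmemT]; push_neg
        exact ⟨fun h => hc2C1 (h ▸ hw1), fun h => hc2S (h ▸ hs'S),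
          fun h => hc2C1 (h ▸ htC1)⟩
      have hS'reach : ∀ s ∈ S, s ≠ s' → ReachAvoid G T s c2 := by
        intro s hs hss'
        obtain ⟨pw, _, hv, hA, hSs⟩ := fan_path F2 hs
        refine ReachAvoid.symm ⟨pw, fun x hx hxT => ?_⟩
        rcases (hmemT x).1 hxT with rfl | rfl | rfl
        · rcases hA x hx with h | h
          · exact hdisj x hw1 h
          · exact h1S x hw1 h
        · exact hss' (hSs x hx hs'S).symm
        · rcases hA x hx with h | h
          · exact hdisj x htC1 h
          · exact h1S x htC1 h
      -- the centre c1 can always reach c2 when t ≠ c1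
      have hc1c2 : t ≠ c1 → ReachAvoid G T c1 c2 := by
        intro htc1
        have hs'mem := hs'S
        rw [F1.hS] at hs'mem
        simp only [Set.mem_insert_iff, Set.mem_singleton_iff] at hs'mem
        have hS1m : F1.s1 ∈ S := by
          have h : F1.s1 ∈ ({F1.s1, F1.s2, F1.s3} : Set V) := by simp
          rwa [← F1.hS] at h
        have hS2m : F1.s2 ∈ S := by
          have h : F1.s2 ∈ ({F1.s1, F1.s2, F1.s3} : Set V) := by simp
          rwa [← F1.hS] at h
        have hS3m : F1.s3 ∈ S := by
          have h : F1.s3 ∈ ({F1.s1, F1.s2, F1.s3} : Set V) := by simp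
          rwa [← F1.hS] at h
        obtain ⟨p, q, hpS, hqS, hpq, hps', hqs'⟩ :
            ∃ p q, p ∈ S ∧ q ∈ S ∧ p ≠ q ∧ p ≠ s' ∧ q ≠ s' := by
          rcases hs'mem with heq | heq | heq
          · exact ⟨F1.s2, F1.s3, hS2m, hS3m, F1.h23,
              fun h => F1.h12 (heq ▸ h.symm), fun h => F1.h13 (heq ▸ h.symm)⟩
          · exact ⟨F1.s1, F1.s3, hS1m, hS3m, F1.h13,
              fun h => F1.h12 (heq ▸ h), fun h => F1.h23 (heq ▸ h.symm)⟩
          · exact ⟨F1.s1, F1.s2, hS1m, hS2m, F1.h12,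
              fun h => F1.h13 (heq ▸ h), fun h => F1.h23 (heq ▸ h)⟩
        obtain ⟨wp, wq, hvp, hAp, hSp, hvq, hAq, hSq, hinter⟩ :=
          fan_two_paths F1 hpS hqS hpq
        by_cases htp : t ∈ wp.support
        · by_cases htq : t ∈ wq.support
          · exact absurd (hinter t htp htq) htc1
          · have h1 : ReachAvoid G T c1 q := by
              refine ⟨wq, fun x hx hxT => ?_⟩
              rcases (hmemT x).1 hxT with rfl | rfl | rfl
              · exact hw1F (hvq x hx)
              · exact hqs' (hSq x hx hs'S).symm
              · exact htq hx
            exact h1.trans (hS'reach q hqS hqs')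
        · have h1 : ReachAvoid G T c1 p := by
            refine ⟨wp, fun x hx hxT => ?_⟩
            rcases (hmemT x).1 hxT with rfl | rfl | rfl
            · exact hw1F (hvp x hx)
            · exact hps' (hSp x hx hs'S).symm
            · exact htp hx
          exact h1.trans (hS'reach p hpS hps')
      refine ⟨c2, hc2T, fun a haT => ?_⟩
      rcases hcov a with haC | haC | haS
      · -- a ∈ C1
        have hpD : a ∉ ({w1, t} : Set V) := by
          rintro (rfl | rfl)
          · exact haT ((hmemT a).2 (Or.inl rfl))
          · exact haT ((hmemT a).2 (Or.inr (Or.inr rfl)))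
        obtain ⟨s0, k, hs0S, hs0D, hkC, hkD, hadj, hreach⟩ :=
          escape_reach hG h1close (le_trans (Set.ncard_insert_le _ _) (by simp))
            (by rintro x (rfl | rfl); exacts [Or.inl hw1, Or.inl htC1])
            (by
              intro x hxT hxC
              rcases (hmemT x).1 hxT with rfl | rfl | rfl
              · exact Or.inl rfl
              · exact absurd hs'S (h1S x hxC)
              · exact Or.inr rfl)
            hc2C1 hc2S haC hpD
        by_cases hs0s' : s0 = s'
        · -- the escape hit s' : then it went through c1
          have hkc1 : k = c1 := hs'nb k hkC (hs0s' ▸ hadj)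
          have htc1 : t ≠ c1 := by
            intro h
            exact hkD (by rw [hkc1, h]; exact Or.inr rfl)
          have : ReachAvoid G T a c1 := hkc1 ▸ hreach
          exact this.trans (hc1c2 htc1)
        · have hkT : k ∉ T := by
            rw [hmemT]; push_neg
            exact ⟨fun h => hkD (h ▸ Or.inl rfl), fun h => h1S k hkC (h ▸ hs'S),
              fun h => hkD (h ▸ Or.inr rfl)⟩
          have hs0T : s0 ∉ T := by
            rw [hmemT]; push_neg
            exact ⟨fun h => h1S w1 hw1 (h ▸ hs0S), hs0s',
              fun h => h1S t htC1 (h ▸ hs0S)⟩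
          exact (hreach.trans (ReachAvoid.of_adj hadj hkT hs0T)).trans
            (hS'reach s0 hs0S hs0s')
      · -- a ∈ C2
        have hpD : a ∉ ({s'} : Set V) := by
          rintro rfl
          exact haT ((hmemT a).2 (Or.inr (Or.inl rfl)))
        obtain ⟨s0, k, hs0S, hs0D, hkC, hkD, hadj, hreach⟩ :=
          escape_reach hG h2close (by simp)
            (by rintro x rfl; exact Or.inr hs'S)
            (by
              intro x hxT hxC
              rcases (hmemT x).1 hxT with rfl | rfl | rfl
              · exact absurd hxC (hdisj x hw1)
              · exact rfl
              · exact absurd hxC (hdisj x htC1))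
            hc1C2 hc1S haC hpD
        have hkT : k ∉ T := by
          rw [hmemT]; push_neg
          exact ⟨fun h => hdisj k (h ▸ hw1) hkC, fun h => h2S k hkC (h ▸ hs'S),
            fun h => hdisj k (h ▸ htC1) hkC⟩
        have hs0s' : s0 ≠ s' := fun h => hs0D (h ▸ rfl)
        have hs0T : s0 ∉ T := by
          rw [hmemT]; push_neg
          exact ⟨fun h => h1S w1 hw1 (h ▸ hs0S), hs0s',
            fun h => h1S t htC1 (h ▸ hs0S)⟩
        exact (hreach.trans (ReachAvoid.of_adj hadj hkT hs0T)).trans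
          (hS'reach s0 hs0S hs0s')
      · -- a ∈ S
        have has' : a ≠ s' := fun h => haT ((hmemT a).2 (Or.inr (Or.inl h)))
        exact hS'reach a haS has'
    · -- t ∈ C2 : hub c1, fan F1 paths away from s'
      have hc1T : c1 ∉ T := by
        rw [hmemT]; push_neg
        exact ⟨hc1w1, fun h => hc1S (h ▸ hs'S), fun h => hc1C2 (h ▸ htC2)⟩
      have hSreach : ∀ s ∈ S, s ≠ s' → ReachAvoid G T s c1 := by
        intro s hs hss'
        obtain ⟨pw, _, hv, hA, hSs⟩ := fan_path F1 hs
        refine ReachAvoid.symm ⟨pw, fun x hx hxT => ?_⟩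
        rcases (hmemT x).1 hxT with rfl | rfl | rfl
        · exact hw1F (hv x hx)
        · exact hss' (hSs x hx hs'S).symm
        · rcases hA x hx with h | h
          · exact hdisj x h htC2
          · exact h2S x htC2 h
      refine ⟨c1, hc1T, fun a haT => ?_⟩
      rcases hcov a with haC | haC | haS
      · -- a ∈ C1
        have hpD : a ∉ ({w1, s'} : Set V) := by
          rintro (rfl | rfl)
          · exact haT ((hmemT a).2 (Or.inl rfl))
          · exact haT ((hmemT a).2 (Or.inr (Or.inl rfl)))
        obtain ⟨s0, k, hs0S, hs0D, hkC, hkD, hadj, hreach⟩ :=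
          escape_reach hG h1close (le_trans (Set.ncard_insert_le _ _) (by simp))
            (by rintro x (rfl | rfl); exacts [Or.inl hw1, Or.inr hs'S])
            (by
              intro x hxT hxC
              rcases (hmemT x).1 hxT with rfl | rfl | rfl
              · exact Or.inl rfl
              · exact Or.inr rfl
              · exact absurd hxC (fun h => hdisj x h htC2))
            hc2C1 hc2S haC hpD
        have hkT : k ∉ T := by
          rw [hmemT]; push_neg
          exact ⟨fun h => hkD (h ▸ Or.inl rfl), fun h => hkD (h ▸ Or.inr rfl),
            fun h => hdisj k hkC (h ▸ htC2)⟩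
        have hs0s' : s0 ≠ s' := fun h => hs0D (h ▸ Or.inr rfl)
        have hs0T : s0 ∉ T := by
          rw [hmemT]; push_neg
          exact ⟨fun h => h1S w1 hw1 (h ▸ hs0S), hs0s',
            fun h => h2S t htC2 (h ▸ hs0S)⟩
        exact (hreach.trans (ReachAvoid.of_adj hadj hkT hs0T)).trans
          (hSreach s0 hs0S hs0s')
      · -- a ∈ C2
        have hpD : a ∉ ({t, s'} : Set V) := by
          rintro (rfl | rfl)
          · exact haT ((hmemT a).2 (Or.inr (Or.inr rfl)))
          · exact haT ((hmemT a).2 (Or.inr (Or.inl rfl)))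
        obtain ⟨s0, k, hs0S, hs0D, hkC, hkD, hadj, hreach⟩ :=
          escape_reach hG h2close (le_trans (Set.ncard_insert_le _ _) (by simp))
            (by rintro x (rfl | rfl); exacts [Or.inl htC2, Or.inr hs'S])
            (by
              intro x hxT hxC
              rcases (hmemT x).1 hxT with rfl | rfl | rfl
              · exact absurd hxC (hdisj x hw1)
              · exact Or.inr rfl
              · exact Or.inl rfl)
            hc1C2 hc1S haC hpD
        have hkT : k ∉ T := by
          rw [hmemT]; push_neg
          exact ⟨fun h => hdisj k (h ▸ hw1) hkC, fun h => hkD (h ▸ Or.inr rfl),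
            fun h => hkD (h ▸ Or.inl rfl)⟩
        have hs0s' : s0 ≠ s' := fun h => hs0D (h ▸ Or.inr rfl)
        have hs0T : s0 ∉ T := by
          rw [hmemT]; push_neg
          exact ⟨fun h => h1S w1 hw1 (h ▸ hs0S), hs0s',
            fun h => h2S t htC2 (h ▸ hs0S)⟩
        exact (hreach.trans (ReachAvoid.of_adj hadj hkT hs0T)).trans
          (hSreach s0 hs0S hs0s')
      · have has' : a ≠ s' := fun h => haT ((hmemT a).2 (Or.inr (Or.inl h)))
        exact hSreach a haS has'
    · -- t ∈ S : hub c1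
      have hc1T : c1 ∉ T := by
        rw [hmemT]; push_neg
        exact ⟨hc1w1, fun h => hc1S (h ▸ hs'S), fun h => hc1S (h ▸ htS)⟩
      have hSreach : ∀ s ∈ S, s ≠ s' → s ≠ t → ReachAvoid G T s c1 := by
        intro s hs hss' hst
        obtain ⟨pw, _, hv, hA, hSs⟩ := fan_path F1 hs
        refine ReachAvoid.symm ⟨pw, fun x hx hxT => ?_⟩
        rcases (hmemT x).1 hxT with rfl | rfl | rfl
        · exact hw1F (hv x hx)
        · exact hss' (hSs x hx hs'S).symm
        · exact hst (hSs x hx htS).symm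
      refine ⟨c1, hc1T, fun a haT => ?_⟩
      rcases hcov a with haC | haC | haS
      · -- a ∈ C1 : it lies on the fan, walk down to c1
        have haw1 : a ≠ w1 := fun h => haT ((hmemT a).2 (Or.inl h))
        have haF : a ∈ F1.verts := by
          by_contra h
          exact haw1 (huniq1 a haC h)
        obtain ⟨w, hw⟩ := fan_mem_reach F1 h1S haF haC
        refine ⟨w, fun x hx hxT => ?_⟩
        obtain ⟨hxC, hxF⟩ := hw x hx
        rcases (hmemT x).1 hxT with rfl | rfl | rfl
        · exact hw1F hxF
        · exact h1S x hxC hs'S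
        · exact h1S x hxC htS
      · -- a ∈ C2 : through C2 to c2, then along F2 to the third vertex of S
        obtain ⟨w, hw⟩ := reach_in_comp h2conn haC hc2
        have hreach1 : ReachAvoid G T a c2 := by
          refine ⟨w, fun x hx hxT => ?_⟩
          have hxC := hw x hx
          rcases (hmemT x).1 hxT with rfl | rfl | rfl
          · exact hdisj x hw1 hxC
          · exact h2S x hxC hs'S
          · exact h2S x hxC htS
        obtain ⟨r, hrS, hrs', hrt⟩ := third_elem hSfin hS3 hs'S htS (fun h => hts' h.symm)
        obtain ⟨pw, _, hv, hA, hSs⟩ := fan_path F2 hrS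
        have hreach2 : ReachAvoid G T c2 r := by
          refine ⟨pw, fun x hx hxT => ?_⟩
          rcases (hmemT x).1 hxT with rfl | rfl | rfl
          · rcases hA x hx with h | h
            · exact hdisj x hw1 h
            · exact h1S x hw1 h
          · exact hrs' (hSs x hx hs'S).symm
          · exact hrt (hSs x hx htS).symm
        exact (hreach1.trans hreach2).trans (hSreach r hrS hrs' hrt)
      · have has' : a ≠ s' := fun h => haT ((hmemT a).2 (Or.inr (Or.inl h)))
        have hat : a ≠ t := fun h => haT ((hmemT a).2 (Or.inr (Or.inr h)))
        exact hSreach a haS has' hat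
  obtain ⟨hub, hhubT, hstar⟩ := hstar
  intro a b ha hb
  exact (hstar a ha).trans (hstar b hb).symm

end Helpers7
section Helpers8
variable {V : Type*} {G : SimpleGraph V}

lemma walk_push {C C' S : Set V} (hcl : ∀ x ∈ C', ∀ y, y ∉ S → G.Adj x y → y ∈ C')
    (hCS : ∀ x ∈ C, x ∉ S) :
    ∀ {a b : V} (w : G.Walk a b), (∀ x ∈ w.support, x ∈ C) → a ∈ C' → b ∈ C' := by
  intro a b w
  induction w with
  | nil => exact fun _ h => h
  | @cons u v d hadj w ih =>
      intro hw ha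
      have hvC : v ∈ C := hw v (by simp)
      have hvC' : v ∈ C' := hcl u ha v (hCS v hvC) hadj
      exact ih (fun x hx => hw x (List.mem_cons_of_mem _ hx)) hvC'
end Helpers8

/-- Let `G` be a finite 3-connected graph, `S = {x, y, z}` a 3-cut of `G` such that
`G − S` consists of exactly two components `C₁` and `C₂`, and for `i = 1, 2` let `F_i`
be a fan of minimum order among all `c`–`S` fans in `G[V(C_i) ∪ S]` and among all
vertices `c` of `C_i`. If `V(C₁) ∪ S ≠ V(F₁)` and `V(C₂) ∪ S ≠ V(F₂)`, then `G` has
at least two contractible non-edges. -/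
theorem stmt5 {V : Type*} [Fintype V] (G : SimpleGraph V) (hG : KConnected 3 G)
    (x y z : V) (S : Set V) (hSdef : S = {x, y, z}) (hS3 : S.ncard = 3)
    (hScut : IsCutSet G S)
    (C1 C2 : Set V) (h1 : IsCompOf G S C1) (h2 : IsCompOf G S C2) (h12 : C1 ≠ C2)
    (hcover : C1 ∪ C2 = Sᶜ)
    (c1 c2 : V) (hc1 : c1 ∈ C1) (hc2 : c2 ∈ C2)
    (F1 : Fan3 G (C1 ∪ S) c1 S) (F2 : Fan3 G (C2 ∪ S) c2 S)
    (hmin1 : ∀ c' ∈ C1, ∀ F' : Fan3 G (C1 ∪ S) c' S, F1.order ≤ F'.order)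
    (hmin2 : ∀ c' ∈ C2, ∀ F' : Fan3 G (C2 ∪ S) c' S, F2.order ≤ F'.order)
    (hne1 : C1 ∪ S ≠ F1.verts) (hne2 : C2 ∪ S ≠ F2.verts) :
    2 ≤ (contractibleNonEdges G).ncard := by
  classical
  obtain ⟨hC1ne, hC1sub, hC1conn, hC1cl⟩ := h1
  obtain ⟨hC2ne, hC2sub, hC2conn, hC2cl⟩ := h2
  have h1S : ∀ w ∈ C1, w ∉ S := fun w hw => hC1sub hw
  have h2S : ∀ w ∈ C2, w ∉ S := fun w hw => hC2sub hw
  have h1close : ∀ p ∈ C1, ∀ q, G.Adj p q → q ∈ C1 ∪ S := by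
    intro p hp q hadj
    by_cases hq : q ∈ S
    · exact Or.inr hq
    · exact Or.inl (hC1cl p hp q hq hadj)
  have h2close : ∀ p ∈ C2, ∀ q, G.Adj p q → q ∈ C2 ∪ S := by
    intro p hp q hadj
    by_cases hq : q ∈ S
    · exact Or.inr hq
    · exact Or.inl (hC2cl p hp q hq hadj)
  have hdisj : ∀ w, w ∈ C1 → w ∉ C2 := by
    intro w hw1 hw2
    apply h12
    apply Set.Subset.antisymm
    · intro p hp
      obtain ⟨wk, hwk⟩ := reach_in_comp hC1conn hw1 hp
      exact walk_push hC2cl h1S wk hwk hw2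
    · intro p hp
      obtain ⟨wk, hwk⟩ := reach_in_comp hC2conn hw2 hp
      exact walk_push hC1cl h2S wk hwk hw1
  have hcov : ∀ p : V, p ∈ C1 ∨ p ∈ C2 ∨ p ∈ S := by
    intro p
    by_cases hp : p ∈ S
    · exact Or.inr (Or.inr hp)
    · have : p ∈ C1 ∪ C2 := by rw [hcover]; exact hp
      rcases this with h | h
      · exact Or.inl h
      · exact Or.inr (Or.inl h)
  have hvsub1 : F1.verts ⊆ C1 ∪ S := by
    intro w hw
    rcases hw with h | h | h
    exacts [F1.hA1 w h, F1.hA2 w h, F1.hA3 w h]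
  have hvsub2 : F2.verts ⊆ C2 ∪ S := by
    intro w hw
    rcases hw with h | h | h
    exacts [F2.hA1 w h, F2.hA2 w h, F2.hA3 w h]
  obtain ⟨w1, hw1C, hw1F⟩ : ∃ w, w ∈ C1 ∧ w ∉ F1.verts := by
    have h : ¬ (C1 ∪ S ⊆ F1.verts) := fun h => hne1 (Set.Subset.antisymm h hvsub1)
    obtain ⟨w, hwCS, hwF⟩ := Set.not_subset.1 h
    rcases hwCS with hw | hw
    · exact ⟨w, hw, hwF⟩
    · exact absurd (fan_S_subset F1 hw) hwF
  obtain ⟨w2, hw2C, hw2F⟩ : ∃ w, w ∈ C2 ∧ w ∉ F2.verts := by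
    have h : ¬ (C2 ∪ S ⊆ F2.verts) := fun h => hne2 (Set.Subset.antisymm h hvsub2)
    obtain ⟨w, hwCS, hwF⟩ := Set.not_subset.1 h
    rcases hwCS with hw | hw
    · exact ⟨w, hw, hwF⟩
    · exact absurd (fan_S_subset F2 hw) hwF
  have hSfin : S.Finite := Set.toFinite _
  have hc1S : c1 ∉ S := h1S c1 hc1
  have hc2S : c2 ∉ S := h2S c2 hc2
  have hc1c2 : c1 ≠ c2 := fun h => hdisj c1 hc1 (h ▸ hc2)
  have hcard5 : 5 ≤ Nat.card V := by
    have hc2E : c2 ∉ S := hc2S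
    have hc1E : c1 ∉ insert c2 S := by
      intro h
      rcases h with h | h
      · exact hc1c2 h
      · exact hc1S h
    have hE : (insert c1 (insert c2 S)).ncard = 5 := by
      rw [Set.ncard_insert_of_notMem hc1E, Set.ncard_insert_of_notMem hc2E, hS3]
    have hle : (insert c1 (insert c2 S)).ncard ≤ (Set.univ : Set V).ncard :=
      Set.ncard_le_ncard (Set.subset_univ _) (Set.toFinite _)
    rw [hE, Set.ncard_univ] at hle
    exact hle
  -- cross pairs are contractible non-edges
  have crossPair : ∀ u v', u ∈ C1 → u ∉ F1.verts → v' ∈ C2 → v' ∉ F2.verts →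
      IsContractibleNonEdge G u v' := by
    intro u v' hu huF hv hvF
    have hneuv : u ≠ v' := fun h => hdisj u hu (h ▸ hv)
    have hnadj : ¬ G.Adj u v' := by
      intro hadj
      rcases h1close u hu v' hadj with h | h
      · exact hdisj v' h hv
      · exact h2S v' hv h
    refine contractible_of_cuts hG hneuv hnadj hcard5 ?_
    intro t a b ha hb
    exact cross_cut hG h1close h2close h1S h2S hdisj hcov F1 F2 hc1 hc2
      hu huF hv hvF a b ha hb
  have pair_mem : ∀ u v', IsContractibleNonEdge G u v' →
      s(u, v') ∈ contractibleNonEdges G := fun u v' h => ⟨u, v', rfl, h⟩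
  have conclude : ∀ p q : Sym2 V, p ∈ contractibleNonEdges G → q ∈ contractibleNonEdges G →
      p ≠ q → 2 ≤ (contractibleNonEdges G).ncard := by
    intro p q hp hq hpq
    have h := (Set.one_lt_ncard_iff (Set.toFinite _)).2 ⟨p, q, hp, hq, hpq⟩
    omega
  by_cases hA1 : ∃ w', w' ∈ C1 ∧ w' ∉ F1.verts ∧ w' ≠ w1
  · obtain ⟨w1', hw1'C, hw1'F, hww⟩ := hA1
    refine conclude (s(w1, w2)) (s(w1', w2))
      (pair_mem _ _ (crossPair _ _ hw1C hw1F hw2C hw2F))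
      (pair_mem _ _ (crossPair _ _ hw1'C hw1'F hw2C hw2F)) ?_
    intro h
    rw [Sym2.eq_iff] at h
    rcases h with ⟨h, _⟩ | ⟨h, _⟩
    · exact hww h.symm
    · exact hdisj w1 hw1C (h ▸ hw2C)
  by_cases hA2 : ∃ w', w' ∈ C2 ∧ w' ∉ F2.verts ∧ w' ≠ w2
  · obtain ⟨w2', hw2'C, hw2'F, hww⟩ := hA2
    refine conclude (s(w1, w2)) (s(w1, w2'))
      (pair_mem _ _ (crossPair _ _ hw1C hw1F hw2C hw2F))
      (pair_mem _ _ (crossPair _ _ hw1C hw1F hw2'C hw2'F)) ?_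
    intro h
    rw [Sym2.eq_iff] at h
    rcases h with ⟨_, h⟩ | ⟨h, _⟩
    · exact hww h.symm
    · exact hdisj w1 hw1C (h ▸ hw2'C)
  push_neg at hA1 hA2
  have huniq1 : ∀ w ∈ C1, w ∉ F1.verts → w = w1 := fun w hw hwF => hA1 w hw hwF
  by_cases hcb : IsContractibleNonEdge G c1 w2
  · refine conclude (s(w1, w2)) (s(c1, w2))
      (pair_mem _ _ (crossPair _ _ hw1C hw1F hw2C hw2F)) (pair_mem _ _ hcb) ?_
    intro h
    rw [Sym2.eq_iff] at h
    rcases h with ⟨h, _⟩ | ⟨h, _⟩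
    · exact hw1F (h ▸ fan_c_mem F1)
    · exact hdisj w1 hw1C (h ▸ hw2C)
  · -- there is a vertex s' of S with no C1-neighbour besides c1
    have hs'ex : ∃ s', s' ∈ S ∧ ∀ k ∈ C1, G.Adj k s' → k = c1 := by
      by_contra hcon
      push_neg at hcon
      apply hcb
      have hnec : c1 ≠ w2 := fun h => hdisj c1 hc1 (h ▸ hw2C)
      have hnadj : ¬ G.Adj c1 w2 := by
        intro hadj
        rcases h1close c1 hc1 w2 hadj with h | h
        · exact hdisj w2 h hw2C
        · exact h2S w2 hw2C h
      refine contractible_of_cuts hG hnec hnadj hcard5 ?_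
      intro t a b ha hb
      refine center_cut hG hSfin hS3 h1close h2close h1S h2S hdisj hcov F2 hc1 hc2
        hw2C hw2F ?_ a b ha hb
      intro s hs
      obtain ⟨k, hkC, hkadj, hkc1⟩ := hcon s hs
      exact ⟨k, hkC, hkc1, hkadj⟩
    obtain ⟨s', hs'S, hs'nb⟩ := hs'ex
    have hpair2 : IsContractibleNonEdge G w1 s' := by
      have hnes : w1 ≠ s' := fun h => h1S w1 hw1C (h ▸ hs'S)
      have hnadj : ¬ G.Adj w1 s' := fun hadj =>
        hw1F ((hs'nb w1 hw1C hadj) ▸ fan_c_mem F1)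
      refine contractible_of_cuts hG hnes hnadj hcard5 ?_
      intro t a b ha hb
      by_cases hts' : t = s'
      · have hset : ({w1, s', t} : Set V) = {w1, s'} := by
          subst hts'; ext w; constructor <;> (intro hmem; simp only [Set.mem_insert_iff, Set.mem_singleton_iff] at hmem ⊢; tauto)
        rw [hset] at ha hb ⊢
        have hcard2 : ({w1, s'} : Set V).ncard ≤ 2 :=
          le_trans (Set.ncard_insert_le _ _) (by simp)
        exact kconn_reach hG (by omega) ha hb
      · exact sprime_cut hG hSfin hS3 h1close h2close h1S h2S hdisj hcov F1 F2 hc1 hc2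
          hC2conn hw1C hw1F huniq1 hs'S hs'nb hts' a b ha hb
    refine conclude (s(w1, w2)) (s(w1, s'))
      (pair_mem _ _ (crossPair _ _ hw1C hw1F hw2C hw2F)) (pair_mem _ _ hpair2) ?_
    intro h
    rw [Sym2.eq_iff] at h
    rcases h with ⟨_, h⟩ | ⟨h, _⟩
    · exact h2S w2 hw2C (h ▸ hs'S)
    · exact h1S w1 hw1C (h ▸ hs'S)
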